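/- arXiv:2510.10317 — 9 statements merged into one kernel-verified Lean document; each statement's English description precedes it below -/
import Mathlib

section
/- Let n ∈ ℕ and let x, y : Fin n → ℝ be two n-tuples of real numbers. There exists an order-preserving bijection g : ℝ → ℝ with g (x i) = y i for all i if and only if x and y have the same order pattern, i.e., for all i, j : Fin n one has x i < x j ↔ y i < y j. -/
/-- An order automorphism of ℝ fixing `(-∞, c]` and sending `p` to `q`, for `c < p`, `c < q`. -/
lemma aux_exists_iso (c p q : ℝ) (hp : c < p) (hq : c < q) :
    ∃ h : ℝ ≃o ℝ, (∀ t, t ≤ c → h t = t) ∧ h p = q := by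
  set r : ℝ := (q - c) / (p - c) with hr
  have hpc : (0:ℝ) < p - c := by linarith
  have hqc : (0:ℝ) < q - c := by linarith
  have hr0 : 0 < r := div_pos hqc hpc
  set f : ℝ → ℝ := fun t => if t ≤ c then t else c + (t - c) * r with hf
  have hmono : StrictMono f := by
    intro a b hab
    simp only [hf]
    rcases le_or_gt a c with ha | ha <;> rcases le_or_gt b c with hb | hb
    · rw [if_pos ha, if_pos hb]; exact hab
    · rw [if_pos ha, if_neg (not_le.mpr hb)]
      nlinarith [mul_pos (sub_pos.mpr hb) hr0]
    · linarith
    · rw [if_neg (not_le.mpr ha), if_neg (not_le.mpr hb)]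
      have := mul_lt_mul_of_pos_right (sub_lt_sub_right hab c) hr0
      linarith
  have hsurj : Function.Surjective f := by
    intro u
    by_cases hu : u ≤ c
    · exact ⟨u, by simp [hf, hu]⟩
    · push_neg at hu
      refine ⟨c + (u - c) / r, ?_⟩
      have h1 : (0:ℝ) < (u - c) / r := div_pos (by linarith) hr0
      have h2 : ¬ (c + (u - c) / r ≤ c) := by linarith
      simp only [hf, h2, if_false]
      field_simp
      ring
  refine ⟨StrictMono.orderIsoOfSurjective f hmono hsurj, ?_, ?_⟩
  · intro t ht
    show f t = t
    simp [hf, ht]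
  · show f p = q
    have : ¬ p ≤ c := not_le.mpr hp
    simp only [hf, this, if_false, hr]
    field_simp
    ring

lemma key (s : Finset ℝ) (f : ℝ → ℝ) (hf : StrictMonoOn f s) :
    ∃ g : ℝ ≃o ℝ, ∀ a ∈ s, g a = f a := by
  induction s using Finset.induction_on_max with
  | empty => exact ⟨OrderIso.refl ℝ, by simp⟩
  | insert a s ha ih =>
    have hs : StrictMonoOn f s := hf.mono (by intro t ht; exact Finset.mem_insert_of_mem ht)
    obtain ⟨g, hg⟩ := ih hs
    rcases s.eq_empty_or_nonempty with rfl | hne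
    · -- just translate g a to f a
      obtain ⟨h, -, hpq⟩ := aux_exists_iso (min (g a) (f a) - 1) (g a) (f a)
        (by linarith [min_le_left (g a) (f a)])
        (by linarith [min_le_right (g a) (f a)])
      exact ⟨g.trans h, by simp [hpq]⟩
    · set c : ℝ := s.sup' hne f with hc
      obtain ⟨b₀, hb₀, hcb⟩ := Finset.exists_mem_eq_sup' hne f
      have hamem : a ∈ (insert a s : Finset ℝ) := Finset.mem_insert_self a s
      have hcq : c < f a := by
        rw [hc, hcb]
        exact hf (Finset.mem_insert_of_mem hb₀) hamem (ha b₀ hb₀)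
      have hcp : c < g a := by
        rw [hc, hcb, ← hg b₀ hb₀]
        exact g.strictMono (ha b₀ hb₀)
      obtain ⟨h, hfix, hpq⟩ := aux_exists_iso c (g a) (f a) hcp hcq
      refine ⟨g.trans h, ?_⟩
      intro t ht
      rcases Finset.mem_insert.mp ht with rfl | hts
      · simpa using hpq
      · have : f t ≤ c := Finset.le_sup' f hts
        simp only [OrderIso.trans_apply, hg t hts]
        exact hfix _ this

/-- Two `n`-tuples of reals lie in the same orbit of `Aut(ℝ, <)` (acting coordinatewise)
if and only if they have the same order pattern. -/
theorem stmt_0 (n : ℕ) (x y : Fin n → ℝ) :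
    (∃ g : ℝ ≃o ℝ, ∀ i, g (x i) = y i) ↔ (∀ i j, x i < x j ↔ y i < y j) := by
  constructor
  · rintro ⟨g, hg⟩ i j
    rw [← hg i, ← hg j]
    exact (g.lt_iff_lt).symm
  · intro hpat
    have heq : ∀ i j, x i = x j → y i = y j := by
      intro i j hij
      have h1 : ¬ y i < y j := by rw [← hpat]; exact hij ▸ lt_irrefl _
      have h2 : ¬ y j < y i := by rw [← hpat]; exact hij ▸ lt_irrefl _
      linarith [not_lt.mp h1, not_lt.mp h2]
    classical
    set f : ℝ → ℝ := fun t => if h : ∃ i, x i = t then y h.choose else 0 with hfdef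
    have hfx : ∀ i, f (x i) = y i := by
      intro i
      have hex : ∃ j, x j = x i := ⟨i, rfl⟩
      simp only [hfdef, dif_pos hex]
      exact heq _ _ hex.choose_spec
    have hmono : StrictMonoOn f (Finset.image x Finset.univ : Finset ℝ) := by
      intro a ha b hb hab
      simp only [Finset.coe_image, Set.mem_image] at ha hb
      obtain ⟨i, -, rfl⟩ := ha
      obtain ⟨j, -, rfl⟩ := hb
      rw [hfx i, hfx j]
      exact (hpat i j).mp hab
    obtain ⟨g, hg⟩ := key _ f hmono
    exact ⟨g, fun i => by rw [hg (x i) (Finset.mem_image_of_mem x (Finset.mem_univ i)), hfx i]⟩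
end

section
/- Let z : Fin N → ℝ be any tuple and let k be the cardinality of the range of z. Then there is a bijection from the orbit {g ∘ z | g an order-preserving bijection of ℝ} (a subset of Fin N → ℝ) to ℝ^{(k)} which is equivariant for the coordinatewise actions of the group of order-preserving bijections of ℝ on both sides. -/
/-- The orbit of a tuple `z : Fin N → ℝ` under the coordinatewise action of the
order-automorphism group of `ℝ`. -/
def realOrbit (N : ℕ) (z : Fin N → ℝ) : Set (Fin N → ℝ) :=
  {w | ∃ g : ℝ ≃o ℝ, w = fun i => g (z i)}

/-- The coordinatewise action of an order automorphism of `ℝ` on the orbit of `z`. -/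
def realOrbit.act (N : ℕ) (z : Fin N → ℝ) (g : ℝ ≃o ℝ) (w : realOrbit N z) :
    realOrbit N z :=
  ⟨fun i => g (w.1 i), by
    obtain ⟨g₀, h⟩ := w.2
    exact ⟨g₀.trans g, by funext i; simp [h]⟩⟩

/-- The coordinatewise action of an order automorphism of `ℝ` on strictly increasing
`k`-tuples. -/
def incAct (k : ℕ) (g : ℝ ≃o ℝ) (x : {x : Fin k → ℝ // StrictMono x}) :
    {x : Fin k → ℝ // StrictMono x} :=
  ⟨fun i => g (x.1 i), g.strictMono.comp x.2⟩

lemma bump_exists (c d e : ℝ) (hd : c < d) (he : c < e) :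
    ∃ g : ℝ ≃o ℝ, (∀ t ≤ c, g t = t) ∧ g d = e := by
  have hne1 : d - c ≠ 0 := by linarith
  have hne2 : e - c ≠ 0 := by linarith
  have hcan1 : (d - c) * ((e - c) / (d - c)) = e - c := by field_simp
  have hcan2 : (e - c) * ((d - c) / (e - c)) = d - c := by field_simp
  set f : ℝ → ℝ := fun t =>
    if t ≤ c then t else if t ≤ d then c + (t - c) * ((e - c) / (d - c)) else t - d + e with hf
  have hr : (0:ℝ) < (e - c) / (d - c) := div_pos (by linarith) (by linarith)
  have hr' : (0:ℝ) < (d - c) / (e - c) := div_pos (by linarith) (by linarith)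
  have hmono : StrictMono f := by
    intro x y hxy
    simp only [hf]
    by_cases hx : x ≤ c
    · by_cases hy : y ≤ c
      · simp [hx, hy, hxy]
      · by_cases hy' : y ≤ d
        · simp only [if_pos hx, if_neg hy, if_pos hy']
          nlinarith
        · simp only [if_pos hx, if_neg hy, if_neg hy']
          linarith
    · by_cases hx' : x ≤ d
      · by_cases hy : y ≤ c
        · linarith
        · by_cases hy' : y ≤ d
          · simp only [if_neg hx, if_pos hx', if_neg hy, if_pos hy']
            nlinarith
          · simp only [if_neg hx, if_pos hx', if_neg hy, if_neg hy']
            push_neg at hx hy'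
            have : (x - c) * ((e - c) / (d - c)) ≤ (d - c) * ((e - c) / (d - c)) :=
              mul_le_mul_of_nonneg_right (by linarith) (le_of_lt hr)
            linarith
      · have hy : ¬ y ≤ c := by push_neg at hx ⊢; linarith
        have hy' : ¬ y ≤ d := by push_neg at hx' ⊢; linarith
        simp only [if_neg hx, if_neg hx', if_neg hy, if_neg hy']
        linarith
  have hsurj : Function.Surjective f := by
    intro y
    by_cases hy : y ≤ c
    · exact ⟨y, by simp [hf, hy]⟩
    · push_neg at hy
      by_cases hy' : y ≤ e
      · refine ⟨c + (y - c) * ((d - c) / (e - c)), ?_⟩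
        have h1 : ¬ (c + (y - c) * ((d - c) / (e - c)) ≤ c) := by
          push_neg; nlinarith
        have h2 : c + (y - c) * ((d - c) / (e - c)) ≤ d := by
          have : (y - c) * ((d - c) / (e - c)) ≤ (e - c) * ((d - c) / (e - c)) :=
            mul_le_mul_of_nonneg_right (by linarith) (le_of_lt hr')
          linarith
        simp only [hf, if_neg h1, if_pos h2]
        field_simp
        ring
      · refine ⟨y - e + d, ?_⟩
        push_neg at hy'
        have h1 : ¬ (y - e + d ≤ c) := by push_neg; linarith
        have h2 : ¬ (y - e + d ≤ d) := by push_neg; linarith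
        simp only [hf, if_neg h1, if_neg h2]
        ring
  refine ⟨hmono.orderIsoOfSurjective f hsurj, fun t ht => ?_, ?_⟩
  · show f t = t; simp [hf, ht]
  · show f d = e
    simp only [hf, if_neg (not_le.mpr hd), if_pos (le_refl d)]
    linarith

lemma exists_orderIso_extend : ∀ (k : ℕ) (a b : Fin k → ℝ), StrictMono a → StrictMono b →
    ∃ g : ℝ ≃o ℝ, ∀ i, g (a i) = b i := by
  intro k
  induction k with
  | zero => exact fun a b _ _ => ⟨OrderIso.refl ℝ, fun i => i.elim0⟩
  | succ k ih =>
    rcases k with _ | m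
    · intro a b _ _
      refine ⟨OrderIso.addRight (b 0 - a 0), fun i => ?_⟩
      have : i = 0 := Fin.fin_one_eq_zero i
      subst this
      show a 0 + (b 0 - a 0) = b 0; ring
    · intro a b ha hb
      obtain ⟨g₀, hg₀⟩ := ih (fun j => a j.castSucc) (fun j => b j.castSucc)
        (ha.comp Fin.strictMono_castSucc) (hb.comp Fin.strictMono_castSucc)
      set c := b (Fin.castSucc (Fin.last m)) with hc
      have hcd : c < g₀ (a (Fin.last (m + 1))) := by
        rw [hc, ← hg₀ (Fin.last m)]
        exact g₀.strictMono (ha (Fin.castSucc_lt_last _))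
      have hce : c < b (Fin.last (m + 1)) := hb (Fin.castSucc_lt_last _)
      obtain ⟨h, hfix, hde⟩ := bump_exists c (g₀ (a (Fin.last (m + 1)))) (b (Fin.last (m + 1))) hcd hce
      refine ⟨g₀.trans h, fun i => ?_⟩
      refine Fin.lastCases ?_ ?_ i
      · simpa using hde
      · intro j
        have hle : b j.castSucc ≤ c := hb.monotone (by
          simp [Fin.castSucc_le_castSucc_iff, Fin.le_last])
        simpa [hg₀ j] using hfix _ hle

/-- If `k` is the number of distinct values of the tuple `z : Fin N → ℝ`, then the orbit
of `z` under the coordinatewise action of `Aut(ℝ, <)` is in equivariant bijection with the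
set `ℝ^{(k)}` of strictly increasing `k`-tuples. -/
theorem stmt_2 (N : ℕ) (z : Fin N → ℝ) (k : ℕ) (hk : k = (Set.range z).ncard) :
    ∃ e : realOrbit N z ≃ {x : Fin k → ℝ // StrictMono x},
      ∀ (g : ℝ ≃o ℝ) (w : realOrbit N z),
        e (realOrbit.act N z g w) = incAct k g (e w) := by
  have F : (Set.range z).Finite := Set.finite_range z
  have hcard : F.toFinset.card = k := by
    rw [hk, Set.ncard_eq_toFinset_card _ F]
  set oi := F.toFinset.orderIsoOfFin hcard with hoi
  set s : Fin k → ℝ := fun j => (oi j : ℝ) with hsdef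
  have hs : StrictMono s := fun i j h => by
    exact_mod_cast oi.strictMono h
  have hmem : ∀ j, s j ∈ Set.range z := fun j => by
    have := (oi j).2
    rwa [Set.Finite.mem_toFinset] at this
  -- key independence lemma
  have L : ∀ g₁ g₂ : ℝ ≃o ℝ, (∀ i, g₁ (z i) = g₂ (z i)) → ∀ j, g₁ (s j) = g₂ (s j) := by
    intro g₁ g₂ h j
    obtain ⟨i, hi⟩ := hmem j
    rw [← hi, h i]
  -- each z i is some s j
  have R : ∀ i, ∃ j, s j = z i := by
    intro i
    have hz : z i ∈ F.toFinset := by rw [Set.Finite.mem_toFinset]; exact ⟨i, rfl⟩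
    exact ⟨oi.symm ⟨z i, hz⟩, by simp [hsdef]⟩
  set f : realOrbit N z → {x : Fin k → ℝ // StrictMono x} :=
    fun w => ⟨fun j => w.2.choose (s j), (w.2.choose).strictMono.comp hs⟩ with hfdef
  have hfspec : ∀ (w : realOrbit N z) (i : Fin N), w.1 i = w.2.choose (z i) := by
    intro w i
    conv_lhs => rw [w.2.choose_spec]
  have hinj : Function.Injective f := by
    intro w₁ w₂ h
    have h' : ∀ j, w₁.2.choose (s j) = w₂.2.choose (s j) := fun j =>
      congrFun (congrArg Subtype.val h) j
    apply Subtype.ext; funext i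
    obtain ⟨j, hj⟩ := R i
    rw [hfspec w₁ i, hfspec w₂ i, ← hj, h' j]
  have hsurj : Function.Surjective f := by
    intro x
    obtain ⟨g, hg⟩ := exists_orderIso_extend k s x.1 hs x.2
    refine ⟨⟨fun i => g (z i), ⟨g, rfl⟩⟩, ?_⟩
    apply Subtype.ext; funext j
    set w : realOrbit N z := ⟨fun i => g (z i), ⟨g, rfl⟩⟩ with hw
    have : ∀ i, w.2.choose (z i) = g (z i) := fun i => (hfspec w i).symm
    show w.2.choose (s j) = x.1 j
    rw [L _ g this j, hg j]
  refine ⟨Equiv.ofBijective f ⟨hinj, hsurj⟩, fun g w => ?_⟩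
  show f (realOrbit.act N z g w) = incAct k g (f w)
  apply Subtype.ext; funext j
  set w' := realOrbit.act N z g w with hw'
  have hspec' : ∀ i, w'.2.choose (z i) = (w.2.choose.trans g) (z i) := by
    intro i
    have h1 : w'.1 i = w'.2.choose (z i) := hfspec w' i
    have h2 : w'.1 i = g (w.1 i) := rfl
    rw [← h1, h2, hfspec w i]
    rfl
  show w'.2.choose (s j) = g (w.2.choose (s j))
  rw [L _ _ hspec' j]
  rfl
end

section
/- Let n, m ∈ ℕ and let f : ℝ^{(n)} → ℝ^{(m)} be a function such that f(g ∘ x) = g ∘ f(x) for every order-preserving bijection g : ℝ → ℝ and every x ∈ ℝ^{(n)}. Then there exists a unique strictly monotone (order-preserving injective) map j : Fin m → Fin n such that f(x) = x ∘ j for all x ∈ ℝ^{(n)}. In particular m ≤ n, and 𝔾-equivariant maps ℝ^{(n)} → ℝ^{(m)} correspond bijectively to strictly monotone maps Fin m → Fin n. -/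
noncomputable def scaleAboveFun (c lam : ℝ) : ℝ → ℝ :=
  fun t => if t ≤ c then t else c + lam * (t - c)

lemma scaleAboveFun_mono (c lam : ℝ) (hl : 0 < lam) : StrictMono (scaleAboveFun c lam) := by
  intro s t hst
  unfold scaleAboveFun
  by_cases hs : s ≤ c <;> by_cases ht : t ≤ c <;> simp only [hs, ht, if_pos, if_neg, if_true, if_false]
  · exact hst
  · push_neg at ht; nlinarith
  · push_neg at hs; linarith
  · push_neg at hs ht; nlinarith

lemma scaleAboveFun_surj (c lam : ℝ) (hl : 0 < lam) : Function.Surjective (scaleAboveFun c lam) := by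
  intro y
  by_cases hy : y ≤ c
  · exact ⟨y, if_pos hy⟩
  · push_neg at hy
    refine ⟨c + (y - c) / lam, ?_⟩
    have h1 : 0 < (y - c) / lam := div_pos (by linarith) hl
    unfold scaleAboveFun
    rw [if_neg (by linarith)]
    field_simp
    ring

noncomputable def scaleAbove (c lam : ℝ) (hl : 0 < lam) : ℝ ≃o ℝ :=
  StrictMono.orderIsoOfSurjective _ (scaleAboveFun_mono c lam hl) (scaleAboveFun_surj c lam hl)

lemma scaleAbove_of_le (c lam : ℝ) (hl : 0 < lam) {t : ℝ} (ht : t ≤ c) :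
    scaleAbove c lam hl t = t := by
  simp [scaleAbove, StrictMono.coe_orderIsoOfSurjective, scaleAboveFun, ht]

lemma scaleAbove_of_gt (c lam : ℝ) (hl : 0 < lam) {t : ℝ} (ht : c < t) :
    scaleAbove c lam hl t = c + lam * (t - c) := by
  simp [scaleAbove, StrictMono.coe_orderIsoOfSurjective, scaleAboveFun, not_le.2 ht]

lemma exists_orderIso_map : ∀ (N : ℕ) (a b : Fin N → ℝ), StrictMono a → StrictMono b →
    ∃ g : ℝ ≃o ℝ, ∀ i, g (a i) = b i := by
  intro N
  induction N with
  | zero => exact fun a b _ _ => ⟨OrderIso.refl ℝ, fun i => i.elim0⟩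
  | succ N ih =>
    intro a b ha hb
    rcases Nat.eq_zero_or_pos N with h0 | hpos
    · subst h0
      refine ⟨OrderIso.addRight (b 0 - a 0), fun i => ?_⟩
      fin_cases i
      simp [OrderIso.addRight]
      show a 0 + (b 0 - a 0) = b 0
      ring
    · obtain ⟨g, hg⟩ := ih (a ∘ Fin.castSucc) (b ∘ Fin.castSucc)
        (ha.comp Fin.strictMono_castSucc) (hb.comp Fin.strictMono_castSucc)
      set p : Fin (N + 1) := ⟨N - 1, by omega⟩ with hp
      set c : ℝ := b (Fin.castSucc ⟨N - 1, by omega⟩) with hc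
      set d : ℝ := g (a (Fin.last N)) with hd
      have hcd : c < d := by
        have h1 : g (a (Fin.castSucc ⟨N - 1, by omega⟩)) = c := hg ⟨N - 1, by omega⟩
        rw [← h1]
        exact g.strictMono (ha (by simp [Fin.lt_def]; omega))
      have hcb : c < b (Fin.last N) := hb (by simp [Fin.lt_def, Fin.castSucc]; omega)
      set lam : ℝ := (b (Fin.last N) - c) / (d - c) with hlam
      have hl : 0 < lam := div_pos (by linarith) (by linarith)
      refine ⟨g.trans (scaleAbove c lam hl), fun i => ?_⟩
      by_cases hi : (i : ℕ) < N
      · have hieq : i = Fin.castSucc ⟨(i : ℕ), hi⟩ := by simp [Fin.castSucc, Fin.ext_iff]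
        have hbc : b i ≤ c := by
          rw [hieq, hc]
          exact hb.monotone (by simp [Fin.le_def]; omega)
        have : g (a i) = b i := by rw [hieq]; exact hg ⟨(i : ℕ), hi⟩
        simp only [OrderIso.trans_apply, this]
        exact scaleAbove_of_le c lam hl hbc
      · have hieq : i = Fin.last N := by
          simp [Fin.ext_iff, Fin.last]; omega
        subst hieq
        simp only [OrderIso.trans_apply, ← hd]
        rw [scaleAbove_of_gt c lam hl hcd, hlam]
        field_simp
        rw [mul_div_assoc, div_self (sub_ne_zero.mpr hcd.ne'), mul_one]
        ring


noncomputable def bumpFun (u v v' w : ℝ) : ℝ → ℝ := fun t =>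
  if t ≤ u then t
  else if t ≤ v then u + (t - u) * ((v' - u) / (v - u))
  else if t ≤ w then v' + (t - v) * ((w - v') / (w - v))
  else t

variable {u v v' w : ℝ}

lemma bumpFun_mono (h1 : u < v) (h2 : v < w) (h3 : u < v') (h4 : v' < w) :
    StrictMono (bumpFun u v v' w) := by
  have hr1 : 0 < (v' - u) / (v - u) := div_pos (by linarith) (by linarith)
  have hr2 : 0 < (w - v') / (w - v) := div_pos (by linarith) (by linarith)
  have e1 : u + (v - u) * ((v' - u) / (v - u)) = v' := by
    rw [mul_div_assoc', mul_comm, mul_div_assoc, div_self (by linarith : v - u ≠ 0)]; ring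
  have e2 : v' + (w - v) * ((w - v') / (w - v)) = w := by
    rw [mul_div_assoc', mul_comm, mul_div_assoc, div_self (by linarith : w - v ≠ 0)]; ring
  -- bounds on the middle branches
  have b2 : ∀ {t : ℝ}, t ≤ v → u + (t - u) * ((v' - u) / (v - u)) ≤ v' := by
    intro t ht
    nlinarith [mul_le_mul_of_nonneg_right (show t - u ≤ v - u by linarith) hr1.le]
  have b3 : ∀ {t : ℝ}, t ≤ w → v' + (t - v) * ((w - v') / (w - v)) ≤ w := by
    intro t ht
    nlinarith [mul_le_mul_of_nonneg_right (show t - v ≤ w - v by linarith) hr2.le]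
  intro s t hst
  unfold bumpFun
  rcases le_or_gt s u with hs1 | hs1
  · rw [if_pos hs1]
    rcases le_or_gt t u with ht1 | ht1
    · rw [if_pos ht1]; exact hst
    · rw [if_neg (not_le.2 ht1)]
      rcases le_or_gt t v with ht2 | ht2
      · rw [if_pos ht2]
        nlinarith [mul_pos (show (0:ℝ) < t - u by linarith) hr1]
      · rw [if_neg (not_le.2 ht2)]
        rcases le_or_gt t w with ht3 | ht3
        · rw [if_pos ht3]
          nlinarith [mul_pos (show (0:ℝ) < t - v by linarith) hr2]
        · rw [if_neg (not_le.2 ht3)]; linarith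
  · rw [if_neg (not_le.2 hs1)]
    have ht1 : u < t := lt_trans hs1 hst
    rw [if_neg (not_le.2 ht1)]
    rcases le_or_gt s v with hs2 | hs2
    · rw [if_pos hs2]
      rcases le_or_gt t v with ht2 | ht2
      · rw [if_pos ht2]
        nlinarith [mul_lt_mul_of_pos_right (show s - u < t - u by linarith) hr1]
      · rw [if_neg (not_le.2 ht2)]
        have hbs := b2 hs2
        rcases le_or_gt t w with ht3 | ht3
        · rw [if_pos ht3]
          nlinarith [mul_pos (show (0:ℝ) < t - v by linarith) hr2]
        · rw [if_neg (not_le.2 ht3)]; linarith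
    · rw [if_neg (not_le.2 hs2)]
      have ht2 : v < t := lt_trans hs2 hst
      rw [if_neg (not_le.2 ht2)]
      rcases le_or_gt s w with hs3 | hs3
      · rw [if_pos hs3]
        rcases le_or_gt t w with ht3 | ht3
        · rw [if_pos ht3]
          nlinarith [mul_lt_mul_of_pos_right (show s - v < t - v by linarith) hr2]
        · rw [if_neg (not_le.2 ht3)]
          have := b3 hs3
          linarith
      · rw [if_neg (not_le.2 hs3)]
        rw [if_neg (not_le.2 (lt_trans hs3 hst))]
        exact hst

lemma bumpFun_surj (h1 : u < v) (h2 : v < w) (h3 : u < v') (h4 : v' < w) :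
    Function.Surjective (bumpFun u v v' w) := by
  intro y
  rcases le_or_gt y u with hy1 | hy1
  · exact ⟨y, if_pos hy1⟩
  · rcases le_or_gt y v' with hy2 | hy2
    · refine ⟨u + (y - u) * ((v - u) / (v' - u)), ?_⟩
      have hq : 0 < (v - u) / (v' - u) := div_pos (by linarith) (by linarith)
      have hgt : 0 < (y - u) * ((v - u) / (v' - u)) :=
        mul_pos (by linarith) hq
      have ecan : (v' - u) * ((v - u) / (v' - u)) = v - u := by
        rw [mul_div_assoc', mul_comm, mul_div_assoc, div_self (by linarith : v' - u ≠ 0)]; ring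
      have hle : (y - u) * ((v - u) / (v' - u)) ≤ v - u := by
        nlinarith [mul_le_mul_of_nonneg_right (show y - u ≤ v' - u by linarith) hq.le]
      unfold bumpFun
      rw [if_neg (by linarith), if_pos (by linarith), add_sub_cancel_left, mul_assoc,
        div_mul_div_comm, mul_comm (v - u), div_self (mul_ne_zero
          (by linarith : v' - u ≠ 0) (by linarith : v - u ≠ 0)), mul_one]
      ring
    · rcases le_or_gt y w with hy3 | hy3
      · refine ⟨v + (y - v') * ((w - v) / (w - v')), ?_⟩
        have hq : 0 < (w - v) / (w - v') := div_pos (by linarith) (by linarith)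
        have hgt : 0 < (y - v') * ((w - v) / (w - v')) := mul_pos (by linarith) hq
        have ecan : (w - v') * ((w - v) / (w - v')) = w - v := by
          rw [mul_div_assoc', mul_comm, mul_div_assoc, div_self (by linarith : w - v' ≠ 0)]; ring
        have hle : (y - v') * ((w - v) / (w - v')) ≤ w - v := by
          nlinarith [mul_le_mul_of_nonneg_right (show y - v' ≤ w - v' by linarith) hq.le]
        unfold bumpFun
        rw [if_neg (by linarith), if_neg (by linarith), if_pos (by linarith), add_sub_cancel_left,
          mul_assoc, div_mul_div_comm, mul_comm (w - v), div_self (mul_ne_zero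
            (by linarith : w - v' ≠ 0) (by linarith : w - v ≠ 0)), mul_one]
        ring
      · refine ⟨y, ?_⟩
        unfold bumpFun
        rw [if_neg (by linarith), if_neg (by linarith), if_neg (by linarith)]

noncomputable def bump (u v v' w : ℝ) (h1 : u < v) (h2 : v < w) (h3 : u < v') (h4 : v' < w) :
    ℝ ≃o ℝ :=
  StrictMono.orderIsoOfSurjective _ (bumpFun_mono h1 h2 h3 h4) (bumpFun_surj h1 h2 h3 h4)

lemma bump_of_le (h1 : u < v) (h2 : v < w) (h3 : u < v') (h4 : v' < w) {t : ℝ} (ht : t ≤ u) :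
    bump u v v' w h1 h2 h3 h4 t = t := by
  simp only [bump, StrictMono.coe_orderIsoOfSurjective, bumpFun, if_pos ht]

lemma bump_of_ge (h1 : u < v) (h2 : v < w) (h3 : u < v') (h4 : v' < w) {t : ℝ} (ht : w ≤ t) :
    bump u v v' w h1 h2 h3 h4 t = t := by
  simp only [bump, StrictMono.coe_orderIsoOfSurjective, bumpFun]
  rcases eq_or_lt_of_le ht with heq | ht'
  · rw [← heq]
    rw [if_neg (by linarith), if_neg (by linarith), if_pos le_rfl]
    rw [mul_div_assoc', mul_comm, mul_div_assoc, div_self (by linarith : w - v ≠ 0)]; ring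
  · rw [if_neg (by linarith), if_neg (by linarith), if_neg (by linarith)]

lemma bump_at_v (h1 : u < v) (h2 : v < w) (h3 : u < v') (h4 : v' < w) :
    bump u v v' w h1 h2 h3 h4 v = v' := by
  simp only [bump, StrictMono.coe_orderIsoOfSurjective, bumpFun]
  rw [if_neg (by linarith), if_pos le_rfl]
  rw [mul_div_assoc', mul_comm, mul_div_assoc, div_self (by linarith : v - u ≠ 0)]; ring


/-- Every map `ℝ^{(n)} → ℝ^{(m)}` equivariant for the coordinatewise action of the
order-automorphism group of `ℝ` is the projection along a unique strictly monotone map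
`Fin m → Fin n`; in particular `m ≤ n`. -/
theorem stmt_3 (n m : ℕ)
    (f : {x : Fin n → ℝ // StrictMono x} → {y : Fin m → ℝ // StrictMono y})
    (hf : ∀ (g : ℝ ≃o ℝ) (x : {x : Fin n → ℝ // StrictMono x}),
      (f ⟨fun i => g (x.1 i), g.strictMono.comp x.2⟩).1 = fun i => g ((f x).1 i)) :
    (∃! j : Fin m → Fin n, StrictMono j ∧
      ∀ x : {x : Fin n → ℝ // StrictMono x}, (f x).1 = x.1 ∘ j) ∧ m ≤ n := by
  classical
  have hx0m : StrictMono (fun i : Fin n => ((i : ℕ) : ℝ)) := fun i j hij => by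
    show ((i : ℕ) : ℝ) < ((j : ℕ) : ℝ)
    exact_mod_cast hij
  set x0 : {x : Fin n → ℝ // StrictMono x} := ⟨fun i => ((i : ℕ) : ℝ), hx0m⟩ with hx0def
  have hx0val : x0.1 = fun i : Fin n => ((i : ℕ) : ℝ) := rfl
  -- Step A: every coordinate of `f x0` is a coordinate of `x0`
  have hmem : ∀ k : Fin m, ∃ i : Fin n, (f x0).1 k = ((i : ℕ) : ℝ) := by
    intro k
    by_contra hcon
    push_neg at hcon
    set v := (f x0).1 k with hv
    set S : Finset ℝ :=
      insert (v - 1) ((Finset.univ.image fun i : Fin n => ((i : ℕ) : ℝ)).filter (· < v)) with hS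
    have hSne : S.Nonempty := ⟨v - 1, Finset.mem_insert_self _ _⟩
    set T : Finset ℝ :=
      insert (v + 1) ((Finset.univ.image fun i : Fin n => ((i : ℕ) : ℝ)).filter (v < ·)) with hT
    have hTne : T.Nonempty := ⟨v + 1, Finset.mem_insert_self _ _⟩
    set u := S.max' hSne with hu
    set w := T.min' hTne with hw
    have huv : u < v := by
      refine (Finset.max'_lt_iff _ _).2 ?_
      intro b hb
      rcases Finset.mem_insert.1 hb with rfl | hb
      · linarith
      · exact (Finset.mem_filter.1 hb).2
    have hvw : v < w := by
      refine (Finset.lt_min'_iff _ _).2 ?_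
      intro b hb
      rcases Finset.mem_insert.1 hb with rfl | hb
      · linarith
      · exact (Finset.mem_filter.1 hb).2
    have hfix : ∀ i : Fin n, ((i : ℕ) : ℝ) ≤ u ∨ w ≤ ((i : ℕ) : ℝ) := by
      intro i
      rcases lt_trichotomy ((i : ℕ) : ℝ) v with h | h | h
      · left
        refine Finset.le_max' _ _ ?_
        rw [hS]
        refine Finset.mem_insert_of_mem (Finset.mem_filter.2 ⟨?_, h⟩)
        exact Finset.mem_image.2 ⟨i, Finset.mem_univ i, rfl⟩
      · exact absurd h.symm (hcon i)
      · right
        refine Finset.min'_le _ _ ?_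
        rw [hT]
        refine Finset.mem_insert_of_mem (Finset.mem_filter.2 ⟨?_, h⟩)
        exact Finset.mem_image.2 ⟨i, Finset.mem_univ i, rfl⟩
    have hv'1 : u < (u + v) / 2 := by linarith
    have hv'2 : (u + v) / 2 < w := by linarith
    set g : ℝ ≃o ℝ := bump u v ((u + v) / 2) w huv hvw hv'1 hv'2 with hg
    have hgx0 : (fun i => g (x0.1 i)) = x0.1 := by
      funext i
      rw [hx0val]
      rcases hfix i with h | h
      · exact bump_of_le huv hvw hv'1 hv'2 h
      · exact bump_of_ge huv hvw hv'1 hv'2 h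
    have heq := hf g x0
    rw [show (⟨fun i => g (x0.1 i), g.strictMono.comp x0.2⟩ :
        {x : Fin n → ℝ // StrictMono x}) = x0 from Subtype.ext hgx0] at heq
    have h2 := congrFun heq k
    have h3 : g v = (u + v) / 2 := bump_at_v huv hvw hv'1 hv'2
    rw [← hv, h3] at h2
    linarith
  -- define j
  choose j hj using hmem
  have hjmono : StrictMono j := by
    intro k k' hkk'
    have h1 : (f x0).1 k < (f x0).1 k' := (f x0).2 hkk'
    rw [hj k, hj k'] at h1
    have : ((j k : ℕ)) < ((j k' : ℕ)) := by exact_mod_cast h1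
    exact this
  have hmain : ∀ x : {x : Fin n → ℝ // StrictMono x}, (f x).1 = x.1 ∘ j := by
    intro x
    obtain ⟨g, hg⟩ := exists_orderIso_map n x0.1 x.1 x0.2 x.2
    have heq := hf g x0
    rw [show (⟨fun i => g (x0.1 i), g.strictMono.comp x0.2⟩ :
        {x : Fin n → ℝ // StrictMono x}) = x from Subtype.ext (funext fun i => hg i)] at heq
    funext k
    rw [heq]
    show g ((f x0).1 k) = x.1 (j k)
    rw [hj k]
    exact hg (j k)
  refine ⟨⟨j, ⟨hjmono, hmain⟩, ?_⟩, ?_⟩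
  · rintro j' ⟨hj'mono, hj'⟩
    funext k
    have h1 := congrFun ((hj' x0).symm.trans (hmain x0)) k
    have h2 : ((j' k : ℕ) : ℝ) = ((j k : ℕ) : ℝ) := h1
    have h3 : ((j' k : ℕ)) = ((j k : ℕ)) := by exact_mod_cast h2
    exact Fin.ext h3
  · simpa using Fintype.card_le_of_injective j hjmono.injective
end

section
/- Fix n ∈ ℕ and let H be the set of order-preserving bijections g : ℝ → ℝ such that g(i) = i for every integer i with 1 ≤ i ≤ n (the stabilizer of the point (1, 2, …, n) of ℝ^{(n)}). Then a strictly increasing m-tuple y ∈ ℝ^{(m)} satisfies g(y i) = y i for all g ∈ H and all i : Fin m if and only if every coordinate y i is an integer belonging to {1, …, n}. In particular any such y exists only when m ≤ n. -/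
open Function

/-- identity below `c`, slope-2 expansion above `c`. -/
noncomputable def fA (c : ℝ) : ℝ → ℝ := fun t => if t ≤ c then t else 2*t - c

/-- identity above `c`, slope-2 expansion below `c`. -/
noncomputable def fB (c : ℝ) : ℝ → ℝ := fun t => if c ≤ t then t else 2*t - c

/-- fixes every integer, moves every non-integer. -/
noncomputable def fF : ℝ → ℝ := fun t => (⌊t⌋ : ℝ) + (Int.fract t)^2

lemma fA_mono (c : ℝ) : StrictMono (fA c) := by
  intro s t h; unfold fA; split_ifs <;> linarith

lemma fA_surj (c : ℝ) : Surjective (fA c) := by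
  intro z
  by_cases h : z ≤ c
  · exact ⟨z, by simp [fA, h]⟩
  · refine ⟨(z+c)/2, ?_⟩
    have h2 : ¬ ((z+c)/2 ≤ c) := by push_neg at h ⊢; linarith
    simp only [fA, if_neg h2]; ring

lemma fB_mono (c : ℝ) : StrictMono (fB c) := by
  intro s t h; unfold fB; split_ifs <;> linarith

lemma fB_surj (c : ℝ) : Surjective (fB c) := by
  intro z
  by_cases h : c ≤ z
  · exact ⟨z, by simp [fB, h]⟩
  · refine ⟨(z+c)/2, ?_⟩
    have h2 : ¬ (c ≤ (z+c)/2) := by push_neg at h ⊢; linarith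
    simp only [fB, if_neg h2]; ring

lemma fF_mono : StrictMono fF := by
  intro s t h
  unfold fF
  have hf : ⌊s⌋ ≤ ⌊t⌋ := Int.floor_le_floor h.le
  have h0 : 0 ≤ Int.fract s := Int.fract_nonneg s
  have h0' : 0 ≤ Int.fract t := Int.fract_nonneg t
  have h1 : Int.fract s < 1 := Int.fract_lt_one s
  rcases eq_or_lt_of_le hf with he | hl
  · have hc : (⌊s⌋ : ℝ) = (⌊t⌋ : ℝ) := by exact_mod_cast he
    have hfr : Int.fract s < Int.fract t := by
      unfold Int.fract; rw [hc]; linarith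
    nlinarith
  · have hc : (⌊s⌋ : ℝ) + 1 ≤ (⌊t⌋ : ℝ) := by exact_mod_cast hl
    nlinarith

lemma fF_surj : Surjective fF := by
  intro z
  set r := Real.sqrt (Int.fract z) with hr
  have h0 : 0 ≤ r := Real.sqrt_nonneg _
  have hsq : r ^ 2 = Int.fract z := Real.sq_sqrt (Int.fract_nonneg z)
  have h1 : r < 1 := by
    nlinarith [Int.fract_lt_one z]
  refine ⟨(⌊z⌋ : ℝ) + r, ?_⟩
  have hfl : ⌊(⌊z⌋ : ℝ) + r⌋ = ⌊z⌋ := by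
    rw [Int.floor_intCast_add]
    have : ⌊r⌋ = 0 := Int.floor_eq_zero_iff.2 ⟨h0, h1⟩
    omega
  have hfr : Int.fract ((⌊z⌋ : ℝ) + r) = r := by
    rw [Int.fract_intCast_add]
    exact Int.fract_eq_self.2 ⟨h0, h1⟩
  unfold fF
  rw [hfl, hfr, hsq]
  exact Int.floor_add_fract z

noncomputable def gA (c : ℝ) : ℝ ≃o ℝ := StrictMono.orderIsoOfSurjective _ (fA_mono c) (fA_surj c)
noncomputable def gB (c : ℝ) : ℝ ≃o ℝ := StrictMono.orderIsoOfSurjective _ (fB_mono c) (fB_surj c)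
noncomputable def gF : ℝ ≃o ℝ := StrictMono.orderIsoOfSurjective _ fF_mono fF_surj

lemma gA_apply (c t : ℝ) : gA c t = fA c t := rfl
lemma gB_apply (c t : ℝ) : gB c t = fB c t := rfl
lemma gF_apply (t : ℝ) : gF t = fF t := rfl

/-- Let `H ≤ Aut(ℝ, <)` be the stabilizer of the point `(1, 2, …, n)` of `ℝ^{(n)}`, i.e. the
set of order-preserving bijections of `ℝ` fixing each integer `1 ≤ i ≤ n`.  A strictly
increasing tuple `y ∈ ℝ^{(m)}` is fixed coordinatewise by every element of `H` iff each
coordinate of `y` is an integer in `{1, …, n}`; in particular such a `y` forces `m ≤ n`. -/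
theorem stmt_4 (n m : ℕ) (y : Fin m → ℝ) (hy : StrictMono y) :
    ((∀ g : ℝ ≃o ℝ, (∀ i : ℕ, 1 ≤ i → i ≤ n → g (i : ℝ) = (i : ℝ)) →
        ∀ i : Fin m, g (y i) = y i) ↔
      (∀ i : Fin m, ∃ j : ℕ, 1 ≤ j ∧ j ≤ n ∧ y i = (j : ℝ))) ∧
    ((∀ g : ℝ ≃o ℝ, (∀ i : ℕ, 1 ≤ i → i ≤ n → g (i : ℝ) = (i : ℝ)) →
        ∀ i : Fin m, g (y i) = y i) → m ≤ n) := by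
  have key : (∀ g : ℝ ≃o ℝ, (∀ i : ℕ, 1 ≤ i → i ≤ n → g (i : ℝ) = (i : ℝ)) →
      ∀ i : Fin m, g (y i) = y i) → ∀ i : Fin m, ∃ j : ℕ, 1 ≤ j ∧ j ≤ n ∧ y i = (j : ℝ) := by
    intro h i
    by_cases hlt : y i < 1
    · exfalso
      have hfix : ∀ k : ℕ, 1 ≤ k → k ≤ n → gB 1 (k : ℝ) = (k : ℝ) := by
        intro k hk _
        rw [gB_apply]
        have : (1 : ℝ) ≤ (k : ℝ) := by exact_mod_cast hk
        simp [fB, this]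
      have := h (gB 1) hfix i
      rw [gB_apply] at this
      have h2 : ¬ ((1:ℝ) ≤ y i) := by linarith
      rw [fB, if_neg h2] at this
      linarith
    by_cases hgt : (n : ℝ) < y i
    · exfalso
      have hfix : ∀ k : ℕ, 1 ≤ k → k ≤ n → gA n (k : ℝ) = (k : ℝ) := by
        intro k _ hk
        rw [gA_apply]
        have : (k : ℝ) ≤ (n : ℝ) := by exact_mod_cast hk
        simp [fA, this]
      have := h (gA n) hfix i
      rw [gA_apply] at this
      have h2 : ¬ (y i ≤ (n:ℝ)) := by linarith
      rw [fA, if_neg h2] at this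
      linarith
    push_neg at hlt hgt
    by_cases hint : (⌊y i⌋ : ℝ) = y i
    · refine ⟨(⌊y i⌋).toNat, ?_, ?_, ?_⟩
      · have : (1 : ℤ) ≤ ⌊y i⌋ := Int.le_floor.2 (by exact_mod_cast hlt)
        omega
      · have : ⌊y i⌋ ≤ (n : ℤ) := by
          have := Int.floor_le_floor hgt
          simpa using this
        omega
      · have h1 : (1 : ℤ) ≤ ⌊y i⌋ := Int.le_floor.2 (by exact_mod_cast hlt)
        have ht : (((⌊y i⌋).toNat : ℕ) : ℝ) = ((⌊y i⌋ : ℤ) : ℝ) := by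
          exact_mod_cast congrArg (Int.cast : ℤ → ℝ) (Int.toNat_of_nonneg (by omega : (0:ℤ) ≤ ⌊y i⌋))
        rw [ht]
        exact hint.symm
    · exfalso
      have hfix : ∀ k : ℕ, 1 ≤ k → k ≤ n → gF (k : ℝ) = (k : ℝ) := by
        intro k _ _
        rw [gF_apply]
        unfold fF
        rw [Int.fract_natCast, Int.floor_natCast]
        norm_num
      have := h gF hfix i
      rw [gF_apply] at this
      unfold fF at this
      have hpos : 0 < Int.fract (y i) := by
        rcases lt_or_eq_of_le (Int.fract_nonneg (y i)) with hp | hp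
        · exact hp
        · exfalso
          apply hint
          have := Int.floor_add_fract (y i)
          rw [← hp] at this
          linarith
      have hlt1 : Int.fract (y i) < 1 := Int.fract_lt_one _
      have hfl := Int.floor_add_fract (y i)
      nlinarith
  constructor
  · constructor
    · exact key
    · intro h g hg i
      obtain ⟨j, h1, h2, h3⟩ := h i
      rw [h3]
      exact hg j h1 h2
  · intro h
    have h' := key h
    choose j h1 h2 h3 using h'
    have hinj : Function.Injective (fun i : Fin m => (⟨j i - 1, by have := h1 i; have := h2 i; omega⟩ : Fin n)) := by
      intro a b hab
      have hj : j a = j b := by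
        have := congrArg Fin.val hab
        simp at this
        have := h1 a; have := h1 b
        omega
      apply hy.injective
      rw [h3 a, h3 b, hj]
    have := Fintype.card_le_of_injective _ hinj
    simpa using this
end

section
/- For n ∈ ℕ let ℕ^{[n]} denote the set of injective functions Fin n → ℕ. Let f : ℕ^{[n]} → ℕ^{[m]} be a function such that f(σ ∘ x) = σ ∘ f(x) for every permutation σ of ℕ and every x ∈ ℕ^{[n]}. Then there exists a unique injective map j : Fin m → Fin n such that f(x) = x ∘ j for all x ∈ ℕ^{[n]}; in particular m ≤ n, and every equivariant map ℕ^{[n]} → ℕ^{[m]} is a projection onto a subset of the coordinates. -/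
open Function

/-- A permutation of `ℕ` carrying one injective `n`-tuple to another. -/
lemma exists_perm_comp (n : ℕ) (x : Fin n → ℕ) (hx : Function.Injective x) :
    ∃ σ : Equiv.Perm ℕ, ∀ i : Fin n, σ (i : ℕ) = x i := by
  classical
  set A : Set ℕ := Set.range (fun i : Fin n => (i : ℕ)) with hA
  set B : Set ℕ := Set.range x with hB
  have hAinj : Function.Injective (fun i : Fin n => (i : ℕ)) := Fin.val_injective
  let eA : Fin n ≃ A := Equiv.ofInjective _ hAinj
  let eB : Fin n ≃ B := Equiv.ofInjective x hx
  have hAc : (Aᶜ : Set ℕ).Infinite := (Set.finite_range _).infinite_compl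
  have hBc : (Bᶜ : Set ℕ).Infinite := (Set.finite_range _).infinite_compl
  haveI : Infinite (Aᶜ : Set ℕ) := hAc.to_subtype
  haveI : Infinite (Bᶜ : Set ℕ) := hBc.to_subtype
  obtain ⟨dA⟩ := nonempty_denumerable (Aᶜ : Set ℕ)
  obtain ⟨dB⟩ := nonempty_denumerable (Bᶜ : Set ℕ)
  let eC : (Aᶜ : Set ℕ) ≃ (Bᶜ : Set ℕ) := (@Denumerable.eqv _ dA).trans (@Denumerable.eqv _ dB).symm
  let σ : Equiv.Perm ℕ :=
    (Equiv.Set.sumCompl A).symm.trans (((eA.symm.trans eB).sumCongr eC).trans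
      (Equiv.Set.sumCompl B))
  refine ⟨σ, fun i => ?_⟩
  have hmem : (i : ℕ) ∈ A := ⟨i, rfl⟩
  show (Equiv.Set.sumCompl B) (((eA.symm.trans eB).sumCongr eC)
    ((Equiv.Set.sumCompl A).symm (i : ℕ))) = x i
  rw [Equiv.Set.sumCompl_symm_apply_of_mem hmem]
  have h1 : eA.symm ⟨(i : ℕ), hmem⟩ = i := by
    apply eA.injective
    rw [Equiv.apply_symm_apply]
    exact Subtype.ext rfl
  simp only [Equiv.sumCongr_apply, Sum.map_inl, Equiv.Set.sumCompl_apply_inl]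
  rw [Equiv.trans_apply, h1]
  rfl

/-- Every map `ℕ^{[n]} → ℕ^{[m]}` between sets of injective tuples that is equivariant for
the coordinatewise action of the infinite symmetric group is the projection onto a unique
subset of the coordinates; in particular `m ≤ n`. -/
theorem stmt_7 (n m : ℕ)
    (f : {x : Fin n → ℕ // Function.Injective x} → {y : Fin m → ℕ // Function.Injective y})
    (hf : ∀ (σ : Equiv.Perm ℕ) (x : {x : Fin n → ℕ // Function.Injective x}),
      (f ⟨fun i => σ (x.1 i), σ.injective.comp x.2⟩).1 = fun i => σ ((f x).1 i)) :
    (∃! j : Fin m → Fin n, Function.Injective j ∧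
      ∀ x : {x : Fin n → ℕ // Function.Injective x}, (f x).1 = x.1 ∘ j) ∧ m ≤ n := by
  classical
  set x₀ : {x : Fin n → ℕ // Function.Injective x} :=
    ⟨fun i => (i : ℕ), Fin.val_injective⟩ with hx₀
  have hlt : ∀ i : Fin m, (f x₀).1 i < n := by
    intro i
    by_contra h
    push_neg at h
    set y := (f x₀).1 i with hy
    set σ : Equiv.Perm ℕ := Equiv.swap y (y + 1) with hσ
    have h1 : (⟨fun k => σ (x₀.1 k), σ.injective.comp x₀.2⟩ :
        {x : Fin n → ℕ // Function.Injective x}) = x₀ := by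
      apply Subtype.ext
      funext k
      have hk : (k : ℕ) < n := k.isLt
      show Equiv.swap y (y + 1) (k : ℕ) = (k : ℕ)
      exact Equiv.swap_apply_of_ne_of_ne (by omega) (by omega)
    have h2 := hf σ x₀
    rw [h1] at h2
    have h3 : y = σ y := by conv_lhs => rw [hy, h2]
    rw [Equiv.swap_apply_left] at h3
    omega
  set j : Fin m → Fin n := fun i => ⟨(f x₀).1 i, hlt i⟩ with hj
  have hjinj : Function.Injective j := by
    intro a b hab
    apply (f x₀).2
    have := congrArg Fin.val hab
    simpa [j] using this
  have hkey : ∀ x : {x : Fin n → ℕ // Function.Injective x}, (f x).1 = x.1 ∘ j := by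
    intro x
    obtain ⟨σ, hσ⟩ := exists_perm_comp n x.1 x.2
    have h1 : (⟨fun k => σ (x₀.1 k), σ.injective.comp x₀.2⟩ :
        {x : Fin n → ℕ // Function.Injective x}) = x := by
      apply Subtype.ext
      funext k
      exact hσ k
    have h2 := hf σ x₀
    rw [h1] at h2
    funext i
    rw [h2]
    simp only [Function.comp_apply]
    rw [← hσ (j i)]
  refine ⟨⟨j, ⟨hjinj, hkey⟩, ?_⟩, Fintype.card_fin m ▸ Fintype.card_fin n ▸
    Fintype.card_le_of_injective j hjinj⟩
  rintro j' ⟨hj'inj, hj'⟩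
  have h1 : x₀.1 ∘ j' = x₀.1 ∘ j := (hj' x₀).symm.trans (hkey x₀)
  exact x₀.2.comp_left h1
end

section
/- Let P be the set of pairs (p, q) ∈ ℝ^{(2)} × ℝ^{(2)} with p lexicographically smaller than q, where for p = (a, b) and q = (c, d) one puts p <lex q iff a < c, or a = c and b < d. Then there is a bijection P ≅ (Fin 3 × ℝ^{(4)}) ⊕ (Fin 3 × ℝ^{(3)}) which is equivariant for the coordinatewise action of the group of order-preserving bijections of ℝ. Equivalently, P is the disjoint union of six 𝔾-orbits, three of which are 𝔾-equivariantly bijective to ℝ^{(4)} and three to ℝ^{(3)}. -/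
/-- `ℝ^{(n)}`: strictly increasing `n`-tuples of reals. -/
def IncTupR (n : ℕ) : Type := {x : Fin n → ℝ // StrictMono x}

/-- The coordinatewise action of an order automorphism of `ℝ` on `ℝ^{(n)}`. -/
def IncTupR.act (n : ℕ) (g : ℝ ≃o ℝ) (x : IncTupR n) : IncTupR n :=
  ⟨fun i => g (x.1 i), g.strictMono.comp x.2⟩

/-- The lexicographic order on `ℝ^{(2)}`. -/
def lexLt (p q : IncTupR 2) : Prop :=
  p.1 0 < q.1 0 ∨ (p.1 0 = q.1 0 ∧ p.1 1 < q.1 1)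

/-- `(ℝ^{(2)})^{(2)}`: pairs of points of `ℝ^{(2)}` in strictly increasing lexicographic
order. -/
def LexPairs : Type := {pq : IncTupR 2 × IncTupR 2 // lexLt pq.1 pq.2}

/-- The coordinatewise action of an order automorphism of `ℝ` on `(ℝ^{(2)})^{(2)}`. -/
def LexPairs.act (g : ℝ ≃o ℝ) (pq : LexPairs) : LexPairs :=
  ⟨(IncTupR.act 2 g pq.1.1, IncTupR.act 2 g pq.1.2), by
    rcases pq.2 with h | ⟨h1, h2⟩
    · exact Or.inl (g.strictMono h)
    · exact Or.inr ⟨congrArg g h1, g.strictMono h2⟩⟩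

def mk2 (a b : ℝ) (h1 : a < b) : IncTupR 2 :=
  ⟨![a,b], by intro i j hij; fin_cases i <;> fin_cases j <;> simp_all⟩

def mk3 (a b c : ℝ) (h1 : a < b) (h2 : b < c) : IncTupR 3 :=
  ⟨![a,b,c], by intro i j hij; fin_cases i <;> fin_cases j <;> simp_all <;> linarith⟩

def mk4 (a b c d : ℝ) (h1 : a < b) (h2 : b < c) (h3 : c < d) : IncTupR 4 :=
  ⟨![a,b,c,d], by intro i j hij; fin_cases i <;> fin_cases j <;> simp_all <;> linarith⟩

noncomputable def fwd (pq : LexPairs) : (Fin 3 × IncTupR 4) ⊕ (Fin 3 × IncTupR 3) :=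
  if hac : pq.1.1.1 0 = pq.1.2.1 0 then
    .inr (0, mk3 (pq.1.1.1 0) (pq.1.1.1 1) (pq.1.2.1 1)
      (pq.1.1.2 (by decide))
      (by rcases pq.2 with h | ⟨_, h2⟩
          · exact absurd h (by rw [hac]; exact lt_irrefl _)
          · exact h2))
  else
    have hac' : pq.1.1.1 0 < pq.1.2.1 0 := pq.2.resolve_right (fun h => hac h.1)
    if hbc : pq.1.1.1 1 < pq.1.2.1 0 then
      .inl (0, mk4 (pq.1.1.1 0) (pq.1.1.1 1) (pq.1.2.1 0) (pq.1.2.1 1)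
        (pq.1.1.2 (by decide)) hbc (pq.1.2.2 (by decide)))
    else if hbc2 : pq.1.1.1 1 = pq.1.2.1 0 then
      .inr (1, mk3 (pq.1.1.1 0) (pq.1.1.1 1) (pq.1.2.1 1)
        (pq.1.1.2 (by decide)) (hbc2 ▸ pq.1.2.2 (by decide)))
    else
      have hcb : pq.1.2.1 0 < pq.1.1.1 1 :=
        lt_of_le_of_ne (not_lt.1 hbc) (fun h => hbc2 h.symm)
      if hbd : pq.1.1.1 1 < pq.1.2.1 1 then
        .inl (1, mk4 (pq.1.1.1 0) (pq.1.2.1 0) (pq.1.1.1 1) (pq.1.2.1 1) hac' hcb hbd)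
      else if hbd2 : pq.1.1.1 1 = pq.1.2.1 1 then
        .inr (2, mk3 (pq.1.1.1 0) (pq.1.2.1 0) (pq.1.1.1 1) hac' hcb)
      else
        .inl (2, mk4 (pq.1.1.1 0) (pq.1.2.1 0) (pq.1.2.1 1) (pq.1.1.1 1) hac'
          (pq.1.2.2 (by decide))
          (lt_of_le_of_ne (not_lt.1 hbd) (fun h => hbd2 h.symm)))

noncomputable def inv : (Fin 3 × IncTupR 4) ⊕ (Fin 3 × IncTupR 3) → LexPairs
  | .inl (i, t) =>
    if i = 0 then
      ⟨(mk2 (t.1 0) (t.1 1) (t.2 (by decide)), mk2 (t.1 2) (t.1 3) (t.2 (by decide))),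
        Or.inl (by simpa [mk2] using t.2 (show (0:Fin 4) < 2 by decide))⟩
    else if i = 1 then
      ⟨(mk2 (t.1 0) (t.1 2) (t.2 (by decide)), mk2 (t.1 1) (t.1 3) (t.2 (by decide))),
        Or.inl (by simpa [mk2] using t.2 (show (0:Fin 4) < 1 by decide))⟩
    else
      ⟨(mk2 (t.1 0) (t.1 3) (t.2 (by decide)), mk2 (t.1 1) (t.1 2) (t.2 (by decide))),
        Or.inl (by simpa [mk2] using t.2 (show (0:Fin 4) < 1 by decide))⟩
  | .inr (i, t) =>
    if i = 0 then
      ⟨(mk2 (t.1 0) (t.1 1) (t.2 (by decide)), mk2 (t.1 0) (t.1 2) (t.2 (by decide))),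
        Or.inr ⟨by simp [mk2], by simpa [mk2] using t.2 (show (1:Fin 3) < 2 by decide)⟩⟩
    else if i = 1 then
      ⟨(mk2 (t.1 0) (t.1 1) (t.2 (by decide)), mk2 (t.1 1) (t.1 2) (t.2 (by decide))),
        Or.inl (by simpa [mk2] using t.2 (show (0:Fin 3) < 1 by decide))⟩
    else
      ⟨(mk2 (t.1 0) (t.1 2) (t.2 (by decide)), mk2 (t.1 1) (t.1 2) (t.2 (by decide))),
        Or.inl (by simpa [mk2] using t.2 (show (0:Fin 3) < 1 by decide))⟩

lemma left_inv : ∀ pq, inv (fwd pq) = pq := by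
  rintro ⟨⟨⟨p, hp⟩, ⟨q, hq⟩⟩, hlex⟩
  unfold fwd
  dsimp only
  split_ifs with hac hbc hbc2 hbd hbd2 <;>
  · apply Subtype.ext
    simp only [inv, mk2, mk3, mk4]
    split_ifs with h1 h2
    all_goals first
      | exact absurd h1 (by decide)
      | exact absurd h2 (by decide)
      | exact absurd rfl h1
      | exact absurd rfl h2
      | (refine Prod.ext ?_ ?_ <;> apply Subtype.ext <;> funext i <;> fin_cases i <;>
          simp_all <;> linarith)

set_option maxHeartbeats 1000000 in
lemma right_inv : ∀ s, fwd (inv s) = s := by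
  have key : ∀ s, fwd (inv s) = s → fwd (inv s) = s := fun _ h => h
  rintro (⟨i, t⟩ | ⟨i, t⟩)
  · have h01 := t.2 (show (0:Fin 4) < 1 by decide)
    have h12 := t.2 (show (1:Fin 4) < 2 by decide)
    have h23 := t.2 (show (2:Fin 4) < 3 by decide)
    fin_cases i <;>
    · simp only [inv, Fin.mk.injEq, Fin.zero_eta, Fin.mk_one, Fin.reduceEq, ↓reduceIte, Fin.reduceFinMk]
      all_goals first
        | exact absurd h1 (by decide) | exact absurd h2 (by decide)
        | exact absurd rfl h1 | exact absurd rfl h2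
        | (unfold fwd
           split_ifs with g1 g2 g3 g4 g5
           all_goals first
             | (exfalso; simp only [mk2, Matrix.cons_val_zero, Matrix.cons_val_one, Matrix.head_cons, eq_self_iff_true, not_true_eq_false] at * <;> linarith)
             | (refine congrArg _ (Prod.ext (β := IncTupR _) rfl (Subtype.ext (α := Fin _ → ℝ) ?_))
                funext j; fin_cases j <;> simp [mk2, mk3, mk4] <;> linarith))
  · have h01 := t.2 (show (0:Fin 3) < 1 by decide)
    have h12 := t.2 (show (1:Fin 3) < 2 by decide)
    fin_cases i <;>
    · simp only [inv, Fin.mk.injEq, Fin.zero_eta, Fin.mk_one, Fin.reduceEq, ↓reduceIte, Fin.reduceFinMk]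
      all_goals first
        | exact absurd h1 (by decide) | exact absurd h2 (by decide)
        | exact absurd rfl h1 | exact absurd rfl h2
        | (unfold fwd
           split_ifs with g1 g2 g3 g4 g5
           all_goals first
             | (exfalso; simp only [mk2, Matrix.cons_val_zero, Matrix.cons_val_one, Matrix.head_cons, eq_self_iff_true, not_true_eq_false] at * <;> linarith)
             | (refine congrArg _ (Prod.ext (β := IncTupR _) rfl (Subtype.ext (α := Fin _ → ℝ) ?_))
                funext j; fin_cases j <;> simp [mk2, mk3, mk4] <;> linarith))

lemma fwd_act (g : ℝ ≃o ℝ) (pq : LexPairs) :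
    fwd (LexPairs.act g pq) =
      Sum.map (Prod.map id (IncTupR.act 4 g)) (Prod.map id (IncTupR.act 3 g)) (fwd pq) := by
  obtain ⟨⟨⟨p, hp⟩, ⟨q, hq⟩⟩, hlex⟩ := pq
  unfold fwd LexPairs.act IncTupR.act
  dsimp only
  simp only [OrderIso.lt_iff_lt, EmbeddingLike.apply_eq_iff_eq]
  split_ifs with h1 h2 h3 h4 h5 <;>
  · simp only [Sum.map, Prod.map, id_eq]
    refine congrArg _ (Prod.ext rfl (Subtype.ext ?_))
    funext j; fin_cases j <;> simp [mk2, mk3, mk4] <;> rfl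

/-- The `𝔾`-set `(ℝ^{(2)})^{(2)}` (pairs of elements of `ℝ^{(2)}` that are strictly
increasing for the lexicographic order) is equivariantly in bijection with the disjoint
union of three copies of `ℝ^{(4)}` and three copies of `ℝ^{(3)}`. -/
theorem stmt_8 :
    ∃ e : LexPairs ≃ (Fin 3 × IncTupR 4) ⊕ (Fin 3 × IncTupR 3),
      ∀ (g : ℝ ≃o ℝ) (pq : LexPairs),
        e (LexPairs.act g pq) =
          Sum.map (Prod.map id (IncTupR.act 4 g)) (Prod.map id (IncTupR.act 3 g)) (e pq) :=
  ⟨⟨fwd, inv, left_inv, right_inv⟩, fwd_act⟩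
end

section
/- Let α be a linearly ordered type and n ∈ ℕ. Associating to a tuple x : Fin n → α the total preorder w_x on Fin n defined by (i ≤_{w_x} j ↔ x i ≤ x j), together with the unique strictly increasing tuple enumerating the distinct values of x, defines a bijection between the set of all functions Fin n → α and the dependent sum, over all total preorders w on Fin n (reflexive, transitive, total relations), of α^{(c(w))}, where c(w) is the number of equivalence classes of the equivalence relation (i ≈ j ↔ i ≤_w j ∧ j ≤_w i) and α^{(k)} denotes the set of strictly increasing k-tuples in α. -/
/-- Total preorders on `Fin n`: reflexive, transitive, total relations. -/
def TotalPreorderOn (n : ℕ) : Type :=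
  {w : Fin n → Fin n → Prop // Reflexive w ∧ Transitive w ∧ ∀ i j, w i j ∨ w j i}

/-- The number of equivalence classes of the equivalence relation `i ≈ j ↔ w i j ∧ w j i`
associated to a total preorder `w` on `Fin n`. -/
noncomputable def numClasses {n : ℕ} (w : TotalPreorderOn n) : ℕ :=
  Nat.card (Quot (fun i j => w.1 i j ∧ w.1 j i))

namespace Stmt10

variable {n : ℕ} {α : Type*} [LinearOrder α]

/-- The quotient of `Fin n` by the equivalence relation of a total preorder. -/
def Q {n : ℕ} (w : TotalPreorderOn n) : Type := Quot (fun i j => w.1 i j ∧ w.1 j i)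

noncomputable instance (w : TotalPreorderOn n) : LinearOrder (Q w) where
  le := Quot.lift₂ (fun i j => w.1 i j)
    (fun i j j' h => propext ⟨fun hij => w.2.2.1 hij h.1, fun hij => w.2.2.1 hij h.2⟩)
    (fun i i' j h => propext ⟨fun hij => w.2.2.1 h.2 hij, fun hij => w.2.2.1 h.1 hij⟩)
  le_refl q := by
    induction q using Quot.ind with | _ i => exact w.2.1 i
  le_trans a b c := by
    induction a using Quot.ind; induction b using Quot.ind; induction c using Quot.ind
    exact fun h h' => w.2.2.1 h h'
  le_antisymm a b := by
    induction a using Quot.ind; induction b using Quot.ind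
    exact fun h h' => Quot.sound ⟨h, h'⟩
  le_total a b := by
    induction a using Quot.ind with | _ i => ?_
    induction b using Quot.ind with | _ j => ?_
    exact w.2.2.2 i j
  toDecidableLE a b := Classical.dec _

noncomputable instance (w : TotalPreorderOn n) : Fintype (Q w) :=
  have : Finite (Q w) := Finite.of_surjective _ (Quot.mk_surjective (r := fun i j => w.1 i j ∧ w.1 j i))
  Fintype.ofFinite _

/-- The order isomorphism between `Fin (numClasses w)` and the quotient. -/
noncomputable def oi (w : TotalPreorderOn n) : Fin (numClasses w) ≃o Q w :=
  monoEquivOfFin (Q w) (Nat.card_eq_fintype_card (α := Q w)).symm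

/-- The class of `i` in the quotient. -/
def qmk (w : TotalPreorderOn n) (i : Fin n) : Q w := Quot.mk _ i

lemma qmk_surjective (w : TotalPreorderOn n) : Function.Surjective (qmk w) :=
  Quot.mk_surjective

@[simp] lemma mk_le_mk (w : TotalPreorderOn n) (i j : Fin n) :
    qmk w i ≤ qmk w j ↔ w.1 i j := Iff.rfl

/-- The total preorder associated to a tuple. -/
def wx (x : Fin n → α) : TotalPreorderOn n :=
  ⟨fun i j => x i ≤ x j, fun _ => le_refl _, fun _ _ _ h h' => le_trans h h',
    fun i j => le_total (x i) (x j)⟩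

/-- The finset of values of a tuple. -/
def sx (x : Fin n → α) : Finset α := Finset.image x Finset.univ

lemma hcard (x : Fin n → α) : (sx x).card = numClasses (wx x) := by
  have e : Q (wx x) ≃ (sx x) := by
    refine Equiv.ofBijective
      (Quot.lift (fun i => (⟨x i, by simp [sx]⟩ : (sx x)))
        (fun i j h => Subtype.ext (le_antisymm h.1 h.2))) ⟨?_, ?_⟩
    · intro a b
      induction a using Quot.ind with | _ i => ?_
      induction b using Quot.ind with | _ j => ?_
      intro h
      have : x i = x j := congrArg Subtype.val h
      exact Quot.sound ⟨le_of_eq this, ge_of_eq this⟩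
    · rintro ⟨v, hv⟩
      simp only [sx, Finset.mem_image, Finset.mem_univ, true_and] at hv
      obtain ⟨i, rfl⟩ := hv
      exact ⟨Quot.mk _ i, rfl⟩
  have h1 : numClasses (wx x) = Nat.card (Q (wx x)) := rfl
  rw [h1, Nat.card_congr e, Nat.card_eq_finsetCard]

/-- The forward map. -/
noncomputable def fwd (x : Fin n → α) :
    Σ w : TotalPreorderOn n, {y : Fin (numClasses w) → α // StrictMono y} :=
  ⟨wx x, ⟨fun k => (sx x).orderEmbOfFin (hcard x) k, ((sx x).orderEmbOfFin (hcard x)).strictMono⟩⟩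

/-- The backward map. -/
noncomputable def bwd (p : Σ w : TotalPreorderOn n, {y : Fin (numClasses w) → α // StrictMono y}) :
    Fin n → α :=
  fun i => p.2.1 ((oi p.1).symm (qmk p.1 i))

lemma bwd_le_iff (p : Σ w : TotalPreorderOn n, {y : Fin (numClasses w) → α // StrictMono y})
    (i j : Fin n) : bwd p i ≤ bwd p j ↔ p.1.1 i j := by
  simp only [bwd]
  rw [p.2.2.le_iff_le, (oi p.1).symm.le_iff_le, mk_le_mk]

lemma range_bwd (p : Σ w : TotalPreorderOn n, {y : Fin (numClasses w) → α // StrictMono y}) :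
    Set.range (bwd p) = Set.range p.2.1 := by
  ext v
  constructor
  · rintro ⟨i, rfl⟩; exact ⟨_, rfl⟩
  · rintro ⟨k, rfl⟩
    obtain ⟨i, hi⟩ := qmk_surjective p.1 ((oi p.1) k)
    exact ⟨i, by simp [bwd, hi]⟩

lemma left_inv (x : Fin n → α) : bwd (fwd x) = x := by
  funext i
  set w := wx x with hw
  let φ : Q w → α := Quot.lift x (fun i j h => le_antisymm h.1 h.2)
  have hφmk : ∀ i, φ (qmk w i) = x i := fun _ => rfl
  have hle : ∀ q q' : Q w, q ≤ q' ↔ φ q ≤ φ q' := by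
    intro q q'
    induction q using Quot.ind with | _ a => ?_
    induction q' using Quot.ind with | _ b => ?_
    exact Iff.rfl
  have hmono : StrictMono φ := fun a b hab =>
    lt_of_le_of_ne ((hle a b).1 hab.le)
      (fun h => absurd ((hle b a).2 h.ge) (not_le_of_gt hab))
  have hψmono : StrictMono (fun k => φ ((oi w) k)) := hmono.comp (oi w).strictMono
  have hψmem : ∀ k, φ ((oi w) k) ∈ sx x := by
    intro k
    obtain ⟨a, ha⟩ := qmk_surjective w ((oi w) k)
    rw [← ha, hφmk]
    simp [sx]
  have hψ := Finset.orderEmbOfFin_unique (hcard x) hψmem hψmono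
  show (sx x).orderEmbOfFin (hcard x) ((oi w).symm (qmk w i)) = x i
  calc (sx x).orderEmbOfFin (hcard x) ((oi w).symm (qmk w i))
      = φ ((oi w) ((oi w).symm (qmk w i))) := (congrFun hψ _).symm
    _ = φ (qmk w i) := by rw [(oi w).apply_symm_apply]
    _ = x i := hφmk i

lemma bwd_injective :
    Function.Injective
      (bwd : (Σ w : TotalPreorderOn n, {y : Fin (numClasses w) → α // StrictMono y}) → _) := by
  rintro ⟨w, y, hy⟩ ⟨w', y', hy'⟩ h
  have hww : w = w' := by
    apply Subtype.ext; funext i j; apply propext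
    rw [← bwd_le_iff ⟨w, y, hy⟩ i j, ← bwd_le_iff ⟨w', y', hy'⟩ i j, h]
  subst hww
  have hr : Set.range y = Set.range y' := by
    rw [← range_bwd ⟨w, y, hy⟩, ← range_bwd ⟨w, y', hy'⟩, h]
  haveI : WellFoundedLT (Fin (numClasses w)) := inferInstance
  obtain rfl : y = y' := (StrictMono.range_inj (β := Fin (numClasses w)) hy hy').1 hr
  rfl

lemma right_inv (p : Σ w : TotalPreorderOn n, {y : Fin (numClasses w) → α // StrictMono y}) :
    fwd (bwd p) = p :=
  bwd_injective (left_inv (bwd p))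

end Stmt10

/-- Sending a tuple `x : Fin n → α` to the total preorder `i ≤ j ↔ x i ≤ x j` on `Fin n`
together with the strictly increasing enumeration of its distinct values is a bijection
from `Fin n → α` to the dependent sum over all total preorders `w` on `Fin n` of the sets
`α^{(c(w))}` of strictly increasing tuples of length the number of classes of `w`. -/
theorem stmt_10 (α : Type*) [LinearOrder α] (n : ℕ) :
    ∃ e : (Fin n → α) ≃
        Σ w : TotalPreorderOn n, {y : Fin (numClasses w) → α // StrictMono y},
      ∀ x : Fin n → α,
        (∀ i j, (e x).1.1 i j ↔ x i ≤ x j) ∧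
        Set.range ((e x).2.1) = Set.range x := by
  refine ⟨⟨Stmt10.fwd, Stmt10.bwd, Stmt10.left_inv, Stmt10.right_inv⟩,
    fun x => ⟨fun i j => Iff.rfl, ?_⟩⟩
  show Set.range (fun k => (Stmt10.sx x).orderEmbOfFin (Stmt10.hcard x) k) = Set.range x
  rw [show (fun k => (Stmt10.sx x).orderEmbOfFin (Stmt10.hcard x) k)
      = ⇑((Stmt10.sx x).orderEmbOfFin (Stmt10.hcard x)) from rfl,
    Finset.range_orderEmbOfFin]
  simp [Stmt10.sx]
end

section
/- Let S be a lextensive category, let (X, R) be an ordered object of S, and let a : 1 → X be a morphism from the terminal object. Pulling back the isomorphism R ⨿ X ⨿ R^op ≅ X × X along the morphism (id_X, a ∘ !_X) : X → X × X yields a coproduct decomposition X ≅ Y ⨿ E ⨿ Z, and the middle piece E (the pullback of the diagonal Δ_X along (id_X, a ∘ !_X)) is a terminal object of S; thus every point a : 1 → X induces a decomposition X ≅ Y ⨿ 1 ⨿ Z. -/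
open CategoryTheory CategoryTheory.Limits

universe v u

variable {S : Type u} [Category.{v} S]

/-- A total order on an object `X` of a lextensive category, given by a monomorphism
`r : R ⟶ X ⨯ X`: the canonical map `R ⨿ X ⨿ R^op → X ⨯ X` (inclusion, diagonal, opposite
inclusion) is an isomorphism, and `R₁₂ ∩ R₂₃ ≤ R₁₃` as subobjects of `X ⨯ X ⨯ X`. -/
structure IsTotalOrderOn [HasFiniteLimits S] [HasFiniteCoproducts S]
    {X R : S} (r : R ⟶ X ⨯ X) [Mono r] : Prop where
  total : IsIso (coprod.desc r (coprod.desc (diag X) (r ≫ (prod.braiding X X).hom)))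
  trans :
    (Subobject.pullback
        (prod.lift prod.fst (prod.snd ≫ prod.fst) : X ⨯ X ⨯ X ⟶ X ⨯ X)).obj
      (Subobject.mk r) ⊓
    (Subobject.pullback (prod.snd : X ⨯ X ⨯ X ⟶ X ⨯ X)).obj (Subobject.mk r) ≤
    (Subobject.pullback
        (prod.lift prod.fst (prod.snd ≫ prod.snd) : X ⨯ X ⨯ X ⟶ X ⨯ X)).obj
      (Subobject.mk r)

noncomputable def triHom [HasFiniteCoproducts S] (W : Fin 3 → S) :
    W 0 ⨿ (W 1 ⨿ W 2) ⟶ ∐ W :=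
  coprod.desc (Sigma.ι W 0) (coprod.desc (Sigma.ι W 1) (Sigma.ι W 2))

noncomputable def triInv [HasFiniteCoproducts S] (W : Fin 3 → S) :
    ∐ W ⟶ W 0 ⨿ (W 1 ⨿ W 2) :=
  Sigma.desc (fun i => match i with
    | 0 => coprod.inl
    | 1 => coprod.inl ≫ coprod.inr
    | 2 => coprod.inr ≫ coprod.inr)

instance triIsIso [HasFiniteCoproducts S] (W : Fin 3 → S) : IsIso (triHom W) := by
  refine ⟨triInv W, ?_, ?_⟩
  · ext <;> simp [triHom, triInv]
    · erw [coprod.inl_desc]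
    · erw [coprod.inr_desc, coprod.inl_desc]
    · erw [coprod.inr_desc, coprod.inr_desc]
  · ext i
    fin_cases i <;> simp [triHom, triInv]
    · erw [coprod.inl_desc]
    · erw [coprod.inr_desc, coprod.inl_desc]
    · erw [coprod.inr_desc, coprod.inr_desc]

lemma desc3_eq [HasFiniteCoproducts S] {W : Fin 3 → S} {T : S} (l : ∀ i, W i ⟶ T) :
    coprod.desc (l 0) (coprod.desc (l 1) (l 2)) = triHom W ≫ Sigma.desc l := by
  ext <;> simp [triHom]

/-- A point `a : 1 → X` of an ordered object `(X, R)` of a lextensive category induces,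
by pulling back `R ⨿ X ⨿ R^op ≅ X ⨯ X` along `(id_X, a ∘ !_X) : X → X ⨯ X`, a
decomposition `X ≅ Y ⨿ E ⨿ Z` in which the middle piece `E` (the pullback of the diagonal)
is terminal; thus `X ≅ Y ⨿ 1 ⨿ Z`. -/
theorem stmt_14 [HasFiniteLimits S] [FinitaryExtensive S]
    {X R : S} (r : R ⟶ X ⨯ X) [Mono r] (hR : IsTotalOrderOn r)
    (a : ⊤_ S ⟶ X) :
    Nonempty (IsTerminal (pullback (diag X) (prod.lift (𝟙 X) (terminal.from X ≫ a)))) ∧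
    IsIso (coprod.desc
      (pullback.snd r (prod.lift (𝟙 X) (terminal.from X ≫ a)))
      (coprod.desc
        (pullback.snd (diag X) (prod.lift (𝟙 X) (terminal.from X ≫ a)))
        (pullback.snd (r ≫ (prod.braiding X X).hom)
          (prod.lift (𝟙 X) (terminal.from X ≫ a))))) := by
  set f : X ⟶ X ⨯ X := prod.lift (𝟙 X) (terminal.from X ≫ a) with hf
  constructor
  · refine ⟨IsTerminal.ofUniqueHom
      (fun T => pullback.lift (terminal.from T ≫ a) (terminal.from T ≫ a) ?_)
      (fun T m => ?_)⟩
    · apply Limits.prod.hom_ext <;> simp [f, ← Category.assoc, terminal.comp_from]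
    · have h1 : m ≫ pullback.fst (diag X) f = m ≫ pullback.snd (diag X) f := by
        have := (m ≫= pullback.condition (f := diag X) (g := f)) =≫ prod.fst
        simp [f] at this
        erw [prod.lift_fst, prod.lift_fst] at this
        exact this
      have h2 : m ≫ pullback.fst (diag X) f = terminal.from T ≫ a := by
        have := (m ≫= pullback.condition (f := diag X) (g := f)) =≫ prod.snd
        simp [f, ← Category.assoc, terminal.comp_from] at this
        erw [prod.lift_snd, prod.lift_snd] at this
        exact this
      apply pullback.hom_ext
      · erw [pullback.lift_fst]; exact h2
      · erw [pullback.lift_snd]; exact h1.symm.trans h2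
  · let Z : Fin 3 → S := ![R, X, R]
    let π : ∀ i, Z i ⟶ X ⨯ X := Fin.cases r (Fin.cases (diag X)
      (Fin.cases (r ≫ (prod.braiding X X).hom) (fun i => i.elim0)))
    have h : IsIso (coprod.desc (π 0) (coprod.desc (π 1) (π 2))) := hR.total
    rw [desc3_eq] at h
    have hiso : IsIso (Sigma.desc π) := IsIso.of_isIso_comp_left (triHom Z) _
    have h2 := FinitaryPreExtensive.isIso_sigmaDesc_fst π f hiso
    let σ := Limits.Sigma.mapIso
      (fun i => (pullbackSymmetry f (π i) : pullback f (π i) ≅ pullback (π i) f))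
    have e : σ.hom ≫
        Limits.Sigma.desc (fun i => pullback.snd (π i) f) =
        Limits.Sigma.desc (fun i => pullback.fst f (π i)) := by
      ext i; simp [σ]
    rw [← e] at h2
    have h3 : IsIso (Limits.Sigma.desc fun i => pullback.snd (π i) f) :=
      IsIso.of_isIso_comp_left σ.hom _
    have h4 : IsIso (coprod.desc (pullback.snd (π 0) f)
        (coprod.desc (pullback.snd (π 1) f) (pullback.snd (π 2) f))) := by
      rw [desc3_eq (fun i => pullback.snd (π i) f)]; infer_instance
    exact h4
end

section
/- Let C be a monoidal category and A a monoid object of C with multiplication m : A ⊗ A → A and unit η : 1 → A. Suppose s : A → A ⊗ A is a morphism satisfying m ∘ s = id_A and (m ⊗ id_A) ∘ (id_A ⊗ s) = s ∘ m = (id_A ⊗ m) ∘ (s ⊗ id_A) (up to associators), i.e., s is an A-bimodule splitting of the multiplication. Then for every left A-module M (object of the category Mod_A of A-modules in C, with action act_M : A ⊗ M → M), the action morphism act_M, regarded as a morphism in Mod_A from the free module A ⊗ M to M, is a split epimorphism in Mod_A: the composite M → A ⊗ M → (A ⊗ A) ⊗ M → A ⊗ M given by (left unitor)⁻¹ followed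 by η ⊗ id_M, then s ⊗ id_M, then (after reassociating) id_A ⊗ act_M, is a morphism of A-modules and a section of act_M. -/
open CategoryTheory MonoidalCategory


private theorem modAssoc_16 {C : Type*} [Category C] [MonoidalCategory C]
    (A : C) [MonObj A] (M : Mod C A) :
    ((MonObj.mul (X := A)) ▷ M.X) ≫ (ModObj.smul (M := A) (X := M.X)) =
      (α_ A A M.X).hom ≫ (A ◁ (ModObj.smul (M := A) (X := M.X))) ≫ (ModObj.smul (M := A) (X := M.X)) :=
  ModObj.mul_smul (M := A) M.X

private theorem modAssocFlip_16 {C : Type*} [Category C] [MonoidalCategory C]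
    (A : C) [MonObj A] (M : Mod C A) :
    (A ◁ (ModObj.smul (M := A) (X := M.X))) ≫ (ModObj.smul (M := A) (X := M.X)) =
      (α_ A A M.X).inv ≫ ((MonObj.mul (X := A)) ▷ M.X) ≫ (ModObj.smul (M := A) (X := M.X)) :=
  ModObj.assoc_flip (M := A) M.X

private theorem lemA_16 {C : Type*} [Category C] [MonoidalCategory C]
    (A : Mon C) (s : A.X ⟶ A.X ⊗ A.X)
    (hs₂ : (s ▷ A.X) ≫ (α_ A.X A.X A.X).hom ≫ (A.X ◁ (MonObj.mul (X := A.X))) = (MonObj.mul (X := A.X)) ≫ s)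
    (M : Mod C A.X) :
    (ModObj.smul (M := A.X) (X := M.X)) ≫ ((λ_ M.X).inv ≫ ((MonObj.one (X := A.X)) ▷ M.X) ≫ (s ▷ M.X) ≫ (α_ A.X A.X M.X).hom ≫
        (A.X ◁ (ModObj.smul (M := A.X) (X := M.X)))) = (s ▷ M.X) ≫ (α_ A.X A.X M.X).hom ≫ (A.X ◁ (ModObj.smul (M := A.X) (X := M.X))) := by
  slice_lhs 1 2 => rw [leftUnitor_inv_naturality]
  slice_lhs 2 3 => rw [whisker_exchange]
  slice_lhs 3 4 => rw [whisker_exchange]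
  slice_lhs 4 5 => rw [associator_naturality_right]
  slice_lhs 5 7 => rw [← MonoidalCategory.whiskerLeft_comp, modAssocFlip_16,
    MonoidalCategory.whiskerLeft_comp, MonoidalCategory.whiskerLeft_comp]
  simp only [selfLeftAction_actionObj]
  rw [show s ▷ (A.X ⊗ M.X) = (α_ A.X A.X M.X).inv ≫ (s ▷ A.X ▷ M.X) ≫
      (α_ (A.X ⊗ A.X) A.X M.X).hom by
    rw [← associator_inv_naturality_left_assoc, Iso.inv_hom_id, Category.comp_id]]
  slice_lhs 5 7 => rw [← pentagon_assoc, ← MonoidalCategory.whiskerLeft_comp,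
    Iso.hom_inv_id, MonoidalCategory.whiskerLeft_id, Category.comp_id]
  slice_lhs 6 7 => rw [← associator_naturality_middle]
  slice_lhs 4 6 => rw [← comp_whiskerRight, ← comp_whiskerRight, hs₂, comp_whiskerRight]
  slice_lhs 2 3 => rw [associator_inv_naturality_left]
  rw [leftUnitor_tensor_inv]
  slice_lhs 2 3 => rw [Iso.hom_inv_id]
  simp only [Category.id_comp, Category.comp_id, Category.assoc]
  slice_lhs 1 3 => rw [← comp_whiskerRight, ← comp_whiskerRight, MonObj.one_mul,
    Iso.inv_hom_id, MonoidalCategory.id_whiskerRight]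
  simp

private theorem lemB_16 {C : Type*} [Category C] [MonoidalCategory C]
    (A : Mon C) (s : A.X ⟶ A.X ⊗ A.X)
    (hs₁ : (A.X ◁ s) ≫ (α_ A.X A.X A.X).inv ≫ ((MonObj.mul (X := A.X)) ▷ A.X) = (MonObj.mul (X := A.X)) ≫ s)
    (M : Mod C A.X) :
    (A.X ◁ ((λ_ M.X).inv ≫ ((MonObj.one (X := A.X)) ▷ M.X) ≫ (s ▷ M.X) ≫ (α_ A.X A.X M.X).hom ≫
        (A.X ◁ (ModObj.smul (M := A.X) (X := M.X))))) ≫ (α_ A.X A.X M.X).inv ≫ ((MonObj.mul (X := A.X)) ▷ M.X)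
      = (s ▷ M.X) ≫ (α_ A.X A.X M.X).hom ≫ (A.X ◁ (ModObj.smul (M := A.X) (X := M.X))) := by
  simp only [MonoidalCategory.whiskerLeft_comp, Category.assoc]
  slice_lhs 5 6 => rw [associator_inv_naturality_right]
  slice_lhs 6 7 => rw [whisker_exchange]
  slice_lhs 4 5 => rw [show (A.X ◁ (α_ A.X A.X M.X).hom) ≫ (α_ A.X A.X (A.X ⊗ M.X)).inv
      = (α_ A.X (A.X ⊗ A.X) M.X).inv ≫ ((α_ A.X A.X A.X).inv ▷ M.X) ≫
        (α_ (A.X ⊗ A.X) A.X M.X).hom by coherence]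
  slice_lhs 3 4 => rw [associator_inv_naturality_middle]
  slice_lhs 6 7 => rw [← associator_naturality_left]
  slice_lhs 4 6 => rw [← comp_whiskerRight, ← comp_whiskerRight, hs₁, comp_whiskerRight]
  slice_lhs 2 3 => rw [associator_inv_naturality_middle]
  slice_lhs 1 2 => rw [show (A.X ◁ (λ_ M.X).inv) ≫ (α_ A.X (𝟙_ C) M.X).inv
      = (ρ_ A.X).inv ▷ M.X by coherence]
  slice_lhs 1 3 => rw [← comp_whiskerRight, ← comp_whiskerRight, MonObj.mul_one,
    Iso.inv_hom_id, MonoidalCategory.id_whiskerRight]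
  simp


/-- Let `A` be a monoid object in a monoidal category `C` and `s : A ⟶ A ⊗ A` an
`A`-bimodule splitting of the multiplication (`m ∘ s = id` and
`(m ⊗ id) ∘ (id ⊗ s) = s ∘ m = (id ⊗ m) ∘ (s ⊗ id)` up to associators).  Then for every
left `A`-module `M` the action map, viewed as a morphism of `A`-modules from the free
module `A ⊗ M` to `M`, is a split epimorphism in `Mod_ A`: the composite
`σ = (λ_M)⁻¹ ≫ (η ▷ M) ≫ (s ▷ M) ≫ (α_) ≫ (A ◁ act)` is a section of the action and a
morphism of `A`-modules `M ⟶ A ⊗ M` (where `A ⊗ M` carries the free module action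
`(α_)⁻¹ ≫ (mul ▷ M)`). -/
theorem stmt_16 {C : Type*} [Category C] [MonoidalCategory C]
    (A : Mon C) (s : A.X ⟶ A.X ⊗ A.X)
    (hs₀ : s ≫ (MonObj.mul (X := A.X)) = 𝟙 A.X)
    (hs₁ : (A.X ◁ s) ≫ (α_ A.X A.X A.X).inv ≫ ((MonObj.mul (X := A.X)) ▷ A.X) = (MonObj.mul (X := A.X)) ≫ s)
    (hs₂ : (s ▷ A.X) ≫ (α_ A.X A.X A.X).hom ≫ (A.X ◁ (MonObj.mul (X := A.X))) = (MonObj.mul (X := A.X)) ≫ s)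
    (M : Mod C A.X) :
    ((λ_ M.X).inv ≫ ((MonObj.one (X := A.X)) ▷ M.X) ≫ (s ▷ M.X) ≫ (α_ A.X A.X M.X).hom ≫
        (A.X ◁ (ModObj.smul (M := A.X) (X := M.X)))) ≫ (ModObj.smul (M := A.X) (X := M.X)) = 𝟙 M.X ∧
    (ModObj.smul (M := A.X) (X := M.X)) ≫ ((λ_ M.X).inv ≫ ((MonObj.one (X := A.X)) ▷ M.X) ≫ (s ▷ M.X) ≫ (α_ A.X A.X M.X).hom ≫
        (A.X ◁ (ModObj.smul (M := A.X) (X := M.X)))) =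
      (A.X ◁ ((λ_ M.X).inv ≫ ((MonObj.one (X := A.X)) ▷ M.X) ≫ (s ▷ M.X) ≫ (α_ A.X A.X M.X).hom ≫
        (A.X ◁ (ModObj.smul (M := A.X) (X := M.X))))) ≫ (α_ A.X A.X M.X).inv ≫ ((MonObj.mul (X := A.X)) ▷ M.X) := by
  constructor
  · slice_lhs 4 6 => rw [← modAssoc_16]
    slice_lhs 3 4 => rw [← comp_whiskerRight, hs₀]
    simp
  · rw [lemA_16 A s hs₂ M, lemB_16 A s hs₁ M]
end
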